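/- Let f(λ,μ) be a nonzero polynomial in ℂ[λ,μ] satisfying f(λ,μ) = −f(μ,λ), and write f_{ij} for the coefficient of λ^i μ^j in f. Then there exist polynomials P₁, P₂ ∈ ℂ[X] with P₁(λ)P₂(μ) − P₁(μ)P₂(λ) = f(λ,μ) if and only if f_{ij}f_{kl} − f_{ik}f_{jl} + f_{jk}f_{il} = 0 for all natural numbers i, j, k, l. -/

import Mathlib

/-- Evaluation of a bivariate polynomial f(λ,μ) at a pair of complex numbers. -/
noncomputable def ev2 (f : MvPolynomial (Fin 2) ℂ) (x y : ℂ) : ℂ :=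
  MvPolynomial.eval ![x, y] f

/-- The coefficient f_{ij} of λ^i μ^j in a bivariate polynomial f(λ,μ). -/
noncomputable def coeff2 (f : MvPolynomial (Fin 2) ℂ) (i j : ℕ) : ℂ :=
  MvPolynomial.coeff (Finsupp.single 0 i + Finsupp.single 1 j) f

noncomputable def DD (i j : ℕ) : Fin 2 →₀ ℕ := Finsupp.single 0 i + Finsupp.single 1 j

lemma DD_inj {i j k l : ℕ} : DD i j = DD k l ↔ i = k ∧ j = l := by
  constructor
  · intro h
    refine ⟨?_, ?_⟩
    · have := congrArg (fun d => d 0) h; simpa [DD] using this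
    · have := congrArg (fun d => d 1) h; simpa [DD] using this
  · rintro ⟨rfl, rfl⟩; rfl

lemma eq_DD (d : Fin 2 →₀ ℕ) : d = DD (d 0) (d 1) := by
  ext x
  fin_cases x <;> simp [DD]

lemma sum_DD (i j : ℕ) : ∑ x ∈ (DD i j).support, DD i j x = i + j := by
  have : (DD i j).sum (fun _ n => n) = i + j := by
    rw [DD, Finsupp.sum_add_index'] <;> simp [Finsupp.sum_single_index]
  simpa [Finsupp.sum] using this

lemma aevalX_eval (v : Fin 2 → ℂ) (k : Fin 2) (P : Polynomial ℂ) :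
    MvPolynomial.eval v (Polynomial.aeval (MvPolynomial.X k : MvPolynomial (Fin 2) ℂ) P)
      = Polynomial.eval (v k) P := by
  rw [Polynomial.aeval_def, Polynomial.hom_eval₂]
  have h1 : (MvPolynomial.eval v).comp (algebraMap ℂ (MvPolynomial (Fin 2) ℂ))
      = RingHom.id ℂ := by ext x; simp [MvPolynomial.algebraMap_eq]
  rw [h1, MvPolynomial.eval_X]
  rfl

lemma aeval_as_sum (k : Fin 2) (P : Polynomial ℂ) :
    Polynomial.aeval (MvPolynomial.X k : MvPolynomial (Fin 2) ℂ) P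
      = ∑ e ∈ P.support, MvPolynomial.monomial (Finsupp.single k e) (P.coeff e) := by
  rw [Polynomial.aeval_def, Polynomial.eval₂_eq_sum, Polynomial.sum_def]
  refine Finset.sum_congr rfl fun e _ => ?_
  rw [MvPolynomial.algebraMap_eq, MvPolynomial.C_mul_X_pow_eq_monomial]

lemma coeff_aeval_mul (P Q : Polynomial ℂ) (i j : ℕ) :
    MvPolynomial.coeff (DD i j)
      (Polynomial.aeval (MvPolynomial.X 0 : MvPolynomial (Fin 2) ℂ) P *
        Polynomial.aeval (MvPolynomial.X 1 : MvPolynomial (Fin 2) ℂ) Q)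
      = P.coeff i * Q.coeff j := by
  rw [aeval_as_sum, aeval_as_sum, Finset.sum_mul_sum]
  have h : ∀ e d : ℕ,
      (MvPolynomial.monomial (Finsupp.single (0 : Fin 2) e) (P.coeff e)) *
      (MvPolynomial.monomial (Finsupp.single (1 : Fin 2) d) (Q.coeff d))
      = MvPolynomial.monomial (DD e d) (P.coeff e * Q.coeff d) := by
    intro e d; rw [MvPolynomial.monomial_mul]; rfl
  simp_rw [h, MvPolynomial.coeff_sum, MvPolynomial.coeff_monomial]
  by_cases hi : i ∈ P.support
  · by_cases hj : j ∈ Q.support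
    · rw [Finset.sum_eq_single i]
      · rw [Finset.sum_eq_single j]
        · simp
        · intro d _ hd; rw [if_neg (by simp [DD_inj, hd])]
        · intro h'; exact absurd hj h'
      · intro e _ he
        apply Finset.sum_eq_zero; intro d _
        rw [if_neg (by simp [DD_inj]; intro h'; exact absurd h' he)]
      · intro h'; exact absurd hi h'
    · rw [Polynomial.notMem_support_iff.mp hj, mul_zero]
      apply Finset.sum_eq_zero; intro e _
      apply Finset.sum_eq_zero; intro d hd
      rw [if_neg]
      simp only [DD_inj, not_and]
      rintro - rfl; exact absurd hd hj
  · rw [Polynomial.notMem_support_iff.mp hi, zero_mul]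
    apply Finset.sum_eq_zero; intro e he
    apply Finset.sum_eq_zero; intro d _
    rw [if_neg]
    simp only [DD_inj, not_and]
    rintro rfl; exact fun _ => absurd he hi

lemma coeff_range_sum (c : ℕ → ℂ) (N n : ℕ) (h : ∀ m, N ≤ m → c m = 0) :
    (∑ i ∈ Finset.range N, Polynomial.C (c i) * Polynomial.X ^ i).coeff n = c n := by
  rw [Polynomial.finset_sum_coeff]
  simp_rw [Polynomial.coeff_C_mul, Polynomial.coeff_X_pow, mul_ite, mul_one, mul_zero]
  rw [Finset.sum_ite_eq (Finset.range N) n c]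
  by_cases hn : n ∈ Finset.range N
  · rw [if_pos hn]
  · rw [if_neg hn, h n (by simpa using hn)]

lemma coeff2_DD (f : MvPolynomial (Fin 2) ℂ) (i j : ℕ) :
    coeff2 f i j = MvPolynomial.coeff (DD i j) f := rfl

lemma coeff2_g (P₁ P₂ : Polynomial ℂ) (i j : ℕ) :
    coeff2 (Polynomial.aeval (MvPolynomial.X 0 : MvPolynomial (Fin 2) ℂ) P₁ *
        Polynomial.aeval (MvPolynomial.X 1 : MvPolynomial (Fin 2) ℂ) P₂ -
      Polynomial.aeval (MvPolynomial.X 1 : MvPolynomial (Fin 2) ℂ) P₁ *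
        Polynomial.aeval (MvPolynomial.X 0 : MvPolynomial (Fin 2) ℂ) P₂) i j
      = P₁.coeff i * P₂.coeff j - P₁.coeff j * P₂.coeff i := by
  rw [coeff2_DD, MvPolynomial.coeff_sub, coeff_aeval_mul,
    mul_comm (Polynomial.aeval (MvPolynomial.X 1 : MvPolynomial (Fin 2) ℂ) P₁),
    coeff_aeval_mul]
  ring

theorem stmt_4 (f : MvPolynomial (Fin 2) ℂ) (hf : f ≠ 0)
    (hskew : ∀ l m : ℂ, ev2 f l m = - ev2 f m l) :
    (∃ P₁ P₂ : Polynomial ℂ, ∀ l m : ℂ,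
        P₁.eval l * P₂.eval m - P₁.eval m * P₂.eval l = ev2 f l m) ↔
    (∀ i j k l : ℕ,
      coeff2 f i j * coeff2 f k l - coeff2 f i k * coeff2 f j l
        + coeff2 f j k * coeff2 f i l = 0) := by
  constructor
  · rintro ⟨P₁, P₂, h⟩ i j k l
    set g : MvPolynomial (Fin 2) ℂ :=
      Polynomial.aeval (MvPolynomial.X 0 : MvPolynomial (Fin 2) ℂ) P₁ *
          Polynomial.aeval (MvPolynomial.X 1 : MvPolynomial (Fin 2) ℂ) P₂ -
        Polynomial.aeval (MvPolynomial.X 1 : MvPolynomial (Fin 2) ℂ) P₁ *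
          Polynomial.aeval (MvPolynomial.X 0 : MvPolynomial (Fin 2) ℂ) P₂ with hg
    have hfg : f = g := by
      apply MvPolynomial.funext
      intro x
      have hx : ![x 0, x 1] = x := by funext i; fin_cases i <;> rfl
      have := h (x 0) (x 1)
      rw [ev2, hx] at this
      rw [← this, hg]
      simp [aevalX_eval]
    have hc : ∀ i j : ℕ, coeff2 f i j = P₁.coeff i * P₂.coeff j - P₁.coeff j * P₂.coeff i := by
      intro i j
      rw [hfg, hg, coeff2_g]
    rw [hc, hc, hc, hc, hc, hc]
    ring
  · intro hp
    obtain ⟨d, hd⟩ := MvPolynomial.support_nonempty.mpr hf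
    set i₀ := d 0 with hi0
    set j₀ := d 1 with hj0
    have hc0 : coeff2 f i₀ j₀ ≠ 0 := by
      rw [coeff2_DD, ← eq_DD d]
      exact MvPolynomial.mem_support_iff.mp hd
    set c := coeff2 f i₀ j₀ with hcdef
    set N := f.totalDegree + 1 with hN
    have hz1 : ∀ m, N ≤ m → coeff2 f m i₀ = 0 := fun m hm => by
      rw [coeff2_DD]
      apply MvPolynomial.coeff_eq_zero_of_totalDegree_lt
      rw [sum_DD]; omega
    have hz2 : ∀ m, N ≤ m → coeff2 f m j₀ / c = 0 := fun m hm => by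
      rw [coeff2_DD]
      rw [MvPolynomial.coeff_eq_zero_of_totalDegree_lt (by rw [sum_DD]; omega), zero_div]
    set P₁ : Polynomial ℂ :=
      ∑ i ∈ Finset.range N, Polynomial.C (coeff2 f i i₀) * Polynomial.X ^ i with hP1
    set P₂ : Polynomial ℂ :=
      ∑ i ∈ Finset.range N, Polynomial.C (coeff2 f i j₀ / c) * Polynomial.X ^ i with hP2
    have hP1c : ∀ n, P₁.coeff n = coeff2 f n i₀ := fun n =>
      coeff_range_sum _ N n hz1
    have hP2c : ∀ n, P₂.coeff n = coeff2 f n j₀ / c := fun n =>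
      coeff_range_sum _ N n hz2
    set g : MvPolynomial (Fin 2) ℂ :=
      Polynomial.aeval (MvPolynomial.X 0 : MvPolynomial (Fin 2) ℂ) P₁ *
          Polynomial.aeval (MvPolynomial.X 1 : MvPolynomial (Fin 2) ℂ) P₂ -
        Polynomial.aeval (MvPolynomial.X 1 : MvPolynomial (Fin 2) ℂ) P₁ *
          Polynomial.aeval (MvPolynomial.X 0 : MvPolynomial (Fin 2) ℂ) P₂ with hg
    have hfg : f = g := by
      apply MvPolynomial.ext
      intro m
      rw [eq_DD m]
      have h1 : MvPolynomial.coeff (DD (m 0) (m 1)) g = coeff2 g (m 0) (m 1) := rfl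
      have h2 : MvPolynomial.coeff (DD (m 0) (m 1)) f = coeff2 f (m 0) (m 1) := rfl
      rw [h1, h2, hg, coeff2_g, hP1c, hP1c, hP2c, hP2c]
      have := hp (m 0) (m 1) i₀ j₀
      field_simp
      linear_combination this
    refine ⟨P₁, P₂, fun l m => ?_⟩
    have hv0 : (![l, m] : Fin 2 → ℂ) 0 = l := rfl
    have hv1 : (![l, m] : Fin 2 → ℂ) 1 = m := rfl
    rw [ev2, hfg, hg]
    simp [aevalX_eval]
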